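/- (Liouville-type result for the truncated nonlinearity.) Let N ≥ 1 be an integer and let v : ℝ^N → ℝ be twice continuously differentiable such that for some constants C, μ > 0 one has |v(x)| + ‖∇v(x)‖ ≤ C·exp(−μ‖x‖) for all x ∈ ℝ^N. Let g : ℝ → ℝ be continuous with 0 ≤ g(s) ≤ max(s, 0)/2 for every s ∈ ℝ. If −Δv(x) + v(x) = g(v(x)) for every x ∈ ℝ^N, then v is identically zero. -/

import Mathlib

open MeasureTheory Metric Set Filter

/-- The Laplacian of `v : ℝ^N → ℝ`: the sum of its second partial derivatives. -/
noncomputable def lap {N : ℕ} (v : EuclideanSpace ℝ (Fin N) → ℝ)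
    (x : EuclideanSpace ℝ (Fin N)) : ℝ :=
  ∑ i : Fin N, fderiv ℝ (fun y => fderiv ℝ v y (EuclideanSpace.single i (1 : ℝ))) x
    (EuclideanSpace.single i (1 : ℝ))

/-- Second derivative test: at a local max of a `C²` function, `f'' ≤ 0`. -/
private lemma sdt_max {f : ℝ → ℝ} {a : ℝ} (hf : ContDiff ℝ 2 f) (h : IsLocalMax f a) :
    deriv (deriv f) a ≤ 0 := by
  by_contra hpos
  push_neg at hpos
  have hf' : ContDiff ℝ 1 (deriv f) := by
    have := hf.fderiv_right (m := 1) (by norm_num)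
    exact this.clm_apply contDiff_const
  have hcont : Continuous (deriv (deriv f)) := hf'.continuous_deriv le_rfl
  have hnb : {t : ℝ | 0 < deriv (deriv f) t} ∈ nhds a := by
    have : IsOpen {t : ℝ | 0 < deriv (deriv f) t} :=
      isOpen_lt continuous_const hcont
    exact this.mem_nhds hpos
  obtain ⟨ε, hε, hball⟩ := Metric.mem_nhds_iff.mp hnb
  set b := a + ε / 2 with hb
  have hab : a < b := by simp [hb]; linarith
  have hsub : Set.Icc a b ⊆ Metric.ball a ε := by
    intro t ht
    simp only [Metric.mem_ball, Real.dist_eq, abs_lt]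
    constructor <;> [skip; skip] <;>
      · rcases ht with ⟨h1, h2⟩
        simp [hb] at h2 ⊢ <;> linarith
  have hpos' : ∀ t ∈ Set.Icc a b, 0 < deriv (deriv f) t := fun t ht => hball (hsub ht)
  have hmono' : StrictMonoOn (deriv f) (Set.Icc a b) := by
    apply strictMonoOn_of_deriv_pos (convex_Icc a b) (hf'.continuous.continuousOn)
    intro t ht
    rw [interior_Icc] at ht
    exact hpos' t ⟨ht.1.le, ht.2.le⟩
  have hda : deriv f a = 0 := h.deriv_eq_zero
  have hder_pos : ∀ t ∈ Set.Ioo a b, 0 < deriv f t := by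
    intro t ht
    have := hmono' (Set.left_mem_Icc.mpr hab.le) ⟨ht.1.le, ht.2.le⟩ ht.1
    rwa [hda] at this
  have hmono : StrictMonoOn f (Set.Icc a b) := by
    apply strictMonoOn_of_deriv_pos (convex_Icc a b) (hf.continuous.continuousOn)
    intro t ht
    rw [interior_Icc] at ht
    exact hder_pos t ht
  have hIoc : Set.Ioc a b ∈ nhdsWithin a (Set.Ioi a) := Ioc_mem_nhdsGT hab
  have hle : ∀ᶠ t in nhdsWithin a (Set.Ioi a), f t ≤ f a :=
    h.filter_mono nhdsWithin_le_nhds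
  obtain ⟨t, ht1, ht2⟩ := (hle.and (eventually_mem_set.mpr hIoc)).exists
  have : f a < f t :=
    hmono (Set.left_mem_Icc.mpr hab.le) ⟨ht2.1.le, ht2.2⟩ ht2.1
  linarith

/-- Second derivative test: at a local min of a `C²` function, `f'' ≥ 0`. -/
private lemma sdt_min {f : ℝ → ℝ} {a : ℝ} (hf : ContDiff ℝ 2 f) (h : IsLocalMin f a) :
    0 ≤ deriv (deriv f) a := by
  have h1 := sdt_max hf.neg h.neg
  have h2 : deriv (fun t => -f t) = fun t => -deriv f t := funext fun t => deriv.neg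
  rw [h2] at h1
  have h3 : deriv (fun t => -deriv f t) a = -deriv (deriv f) a := deriv.neg
  rw [h3] at h1
  linarith

/-- The second directional derivative of a `C²` function along `e` as iterated 1D derivative. -/
private lemma second_dir {N : ℕ} {v : EuclideanSpace ℝ (Fin N) → ℝ} (hv : ContDiff ℝ 2 v)
    (x e : EuclideanSpace ℝ (Fin N)) :
    deriv (deriv (fun t : ℝ => v (x + t • e))) 0
      = fderiv ℝ (fun y => fderiv ℝ v y e) x e := by
  have hvd : Differentiable ℝ v := hv.differentiable (by norm_num)
  have hG : Differentiable ℝ (fun y => fderiv ℝ v y e) := by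
    have h1 : ContDiff ℝ 1 (fun y => fderiv ℝ v y) := hv.fderiv_right (m := 1) (by norm_num)
    exact (h1.clm_apply contDiff_const).differentiable one_ne_zero
  have hline : ∀ t : ℝ, HasDerivAt (fun s : ℝ => x + s • e) e t := by
    intro t
    simpa using ((hasDerivAt_id t).smul_const e).const_add x
  have hd1 : deriv (fun t : ℝ => v (x + t • e)) = fun t => fderiv ℝ v (x + t • e) e := by
    funext t
    exact ((hvd (x + t • e)).hasFDerivAt.comp_hasDerivAt t (hline t)).deriv
  rw [hd1]
  have := ((hG (x + (0 : ℝ) • e)).hasFDerivAt.comp_hasDerivAt 0 (hline 0)).deriv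
  simpa [Function.comp_def] using this

private lemma line_contDiff {N : ℕ} {v : EuclideanSpace ℝ (Fin N) → ℝ} (hv : ContDiff ℝ 2 v)
    (x e : EuclideanSpace ℝ (Fin N)) : ContDiff ℝ 2 (fun t : ℝ => v (x + t • e)) :=
  hv.comp (contDiff_const.add (contDiff_id.smul contDiff_const))

/-- At a global maximum of a `C²` function the Laplacian is nonpositive. -/
private lemma lap_nonpos_at_max {N : ℕ} {v : EuclideanSpace ℝ (Fin N) → ℝ}
    (hv : ContDiff ℝ 2 v) {x0 : EuclideanSpace ℝ (Fin N)} (hmax : ∀ y, v y ≤ v x0) :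
    lap v x0 ≤ 0 := by
  apply Finset.sum_nonpos
  intro i _
  rw [← second_dir hv x0 (EuclideanSpace.single i 1)]
  refine sdt_max (line_contDiff hv x0 _) ?_
  refine Filter.Eventually.of_forall fun t => ?_
  simp only [zero_smul, add_zero]
  exact hmax _

/-- At a global minimum of a `C²` function the Laplacian is nonnegative. -/
private lemma lap_nonneg_at_min {N : ℕ} {v : EuclideanSpace ℝ (Fin N) → ℝ}
    (hv : ContDiff ℝ 2 v) {x0 : EuclideanSpace ℝ (Fin N)} (hmin : ∀ y, v x0 ≤ v y) :
    0 ≤ lap v x0 := by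
  apply Finset.sum_nonneg
  intro i _
  rw [← second_dir hv x0 (EuclideanSpace.single i 1)]
  refine sdt_min (line_contDiff hv x0 _) ?_
  refine Filter.Eventually.of_forall fun t => ?_
  simp only [zero_smul, add_zero]
  exact hmin _

/-- Liouville-type result: a decaying classical solution of `-Δv + v = g(v)` with
`0 ≤ g(s) ≤ s⁺/2` is identically zero. -/
theorem stmt5 (N : ℕ) (hN : 1 ≤ N)
    (v : EuclideanSpace ℝ (Fin N) → ℝ) (hv : ContDiff ℝ 2 v)
    (C μ : ℝ) (hC : 0 < C) (hμ : 0 < μ)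
    (hdecay : ∀ x : EuclideanSpace ℝ (Fin N),
      |v x| + ‖gradient v x‖ ≤ C * Real.exp (-μ * ‖x‖))
    (g : ℝ → ℝ) (hg : Continuous g)
    (hgb : ∀ s : ℝ, 0 ≤ g s ∧ g s ≤ max s 0 / 2)
    (heq : ∀ x : EuclideanSpace ℝ (Fin N), -lap v x + v x = g (v x)) :
    ∀ x : EuclideanSpace ℝ (Fin N), v x = 0 := by
  have hvc : Continuous v := hv.continuous
  have hdec0 : Tendsto (fun x : EuclideanSpace ℝ (Fin N) => C * Real.exp (-μ * ‖x‖))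
      (cocompact _) (nhds 0) := by
    have hμr : Tendsto (fun r : ℝ => μ * r) atTop atTop :=
      Tendsto.const_mul_atTop hμ tendsto_id
    have hneg : Tendsto (fun r : ℝ => -(μ * r)) atTop atBot :=
      tendsto_neg_atBot_iff.mpr hμr
    have hexp : Tendsto (fun r : ℝ => Real.exp (-(μ * r))) atTop (nhds 0) :=
      Real.tendsto_exp_atBot.comp hneg
    have h1 : Tendsto (fun r : ℝ => C * Real.exp (-μ * r)) atTop (nhds 0) := by
      have := hexp.const_mul C
      simpa [neg_mul] using this
    exact h1.comp tendsto_norm_cocompact_atTop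
  have key1 : ∀ x, v x ≤ 0 := by
    by_contra hc
    push_neg at hc
    obtain ⟨x1, hx1⟩ := hc
    have hev : ∀ᶠ x in cocompact (EuclideanSpace ℝ (Fin N)), v x ≤ v x1 := by
      filter_upwards [hdec0.eventually_lt_const hx1] with x hx
      have h1 := hdecay x
      have h2 : v x ≤ |v x| := le_abs_self _
      have h3 : (0 : ℝ) ≤ ‖gradient v x‖ := norm_nonneg _
      linarith
    obtain ⟨x0, hx0⟩ := hvc.exists_forall_ge' x1 hev
    have hm : lap v x0 ≤ 0 := lap_nonpos_at_max hv hx0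
    have h1 := heq x0
    have h2 := (hgb (v x0)).2
    have h3 : 0 < v x0 := lt_of_lt_of_le hx1 (hx0 x1)
    rw [max_eq_left h3.le] at h2
    linarith
  have key2 : ∀ x, 0 ≤ v x := by
    by_contra hc
    push_neg at hc
    obtain ⟨x1, hx1⟩ := hc
    have hx1' : (0 : ℝ) < -v x1 := by linarith
    have hev : ∀ᶠ x in cocompact (EuclideanSpace ℝ (Fin N)), v x1 ≤ v x := by
      filter_upwards [hdec0.eventually_lt_const hx1'] with x hx
      have h1 := hdecay x
      have h2 : -|v x| ≤ v x := neg_abs_le _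
      have h3 : (0 : ℝ) ≤ ‖gradient v x‖ := norm_nonneg _
      linarith
    obtain ⟨x0, hx0⟩ := hvc.exists_forall_le' x1 hev
    have hm : 0 ≤ lap v x0 := lap_nonneg_at_min hv hx0
    have h1 := heq x0
    have h2 := (hgb (v x0)).1
    have h3 : v x0 < 0 := lt_of_le_of_lt (hx0 x1) hx1
    linarith
  intro x
  exact le_antisymm (key1 x) (key2 x)
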